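/- Let s^{(j)} = W c^{(j)}, j = 0,...,N_c-1, with W = (ω_N^{-n·r})_{n∈Λ_N, r∈Λ_L}, and suppose Σ_j |s^{(j)}_ν|² > 0 for all ν ∈ Λ_N. Let B^{(j)} = P F diag(s̃^{(j)}) with s̃^{(j)} the pointwise normalized sensitivities and P the 0/1 diagonal projection onto indices Λ_P ⊆ Λ_N. Denote by ĉ^{(j)} ∈ ℂ^{N²} the zero-extension of c^{(j)} from Λ_L to Λ_N. Then Σ_{j=0}^{N_c-1} (B^{(j)})*B^{(j)} is invertible if and only if the stacked matrix [(ĉ^{(j)}_{(ν-n) mod Λ_N})_{ν∈Λ_P, n∈Λ_N}]_{j=0}^{N_c-1} ∈ ℂ^{N_c|Λ_P| × N²} has rank N². In particular, invertibility implies N_c|Λ_P| ≥ N² and Λ_N ⊆ ∪_{ν∈Λ_P}(ν + Λ_L). -/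

import Mathlib

open Complex Matrix BigOperators Finset

noncomputable def omegaN (N : ℕ) : ℂ := Complex.exp (-2 * Real.pi * Complex.I / N)

/-- ω_N raised to an exponent given modulo N. -/
noncomputable def eN (N : ℕ) (x : ZMod N) : ℂ := omegaN N ^ x.val

/-- The centered 2D DFT matrix F = (ω_N^{ν·n}) indexed by (ZMod N)², which
realizes the index set Λ_N = {-N/2,…,N/2-1}² with periodic wrapping. -/
noncomputable def dft2 (N : ℕ) [NeZero N] :
    Matrix (ZMod N × ZMod N) (ZMod N × ZMod N) ℂ :=
  Matrix.of fun ν n => eN N (ν.1 * n.1 + ν.2 * n.2)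

/-- Centering map identifying Fin L with {-n,…,n} ⊂ ZMod N (L = 2n+1). -/
def cenM (N L : ℕ) (i : Fin L) : ZMod N := ((i : ℕ) : ZMod N) - (((L - 1) / 2 : ℕ) : ZMod N)

/-- (W a)_x = Σ_{r ∈ Λ_L} a_r ω_N^{-r·x}, the trigonometric-polynomial model map. -/
noncomputable def Wmap (N L : ℕ) (a : Fin L × Fin L → ℂ) (x : ZMod N × ZMod N) : ℂ :=
  ∑ r : Fin L × Fin L, a r * eN N (-(cenM N L r.1 * x.1 + cenM N L r.2 * x.2))


section aux
variable (N : ℕ) [NeZero N]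

lemma omegaN_pow_eq_one_iff (m : ℕ) : omegaN N ^ m = 1 ↔ N ∣ m := by
  have hN : (N : ℂ) ≠ 0 := Nat.cast_ne_zero.2 (NeZero.ne N)
  have hπ : (Real.pi : ℂ) ≠ 0 := by exact_mod_cast Real.pi_ne_zero
  rw [omegaN, ← Complex.exp_nat_mul, Complex.exp_eq_one_iff]
  constructor
  · rintro ⟨t, ht⟩
    have hne : (2 : ℂ) * Real.pi * Complex.I ≠ 0 := by
      simp [hπ, Complex.I_ne_zero, two_ne_zero]
    have : (m : ℂ) = ((-t : ℤ) : ℂ) * N := by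
      field_simp at ht
      have h2 : (m : ℂ) * (2 * Real.pi * Complex.I) =
          (((-t : ℤ) : ℂ) * N) * (2 * Real.pi * Complex.I) := by
        push_cast
        linear_combination (-(2 * (Real.pi : ℂ) * Complex.I)) * ht
      have := mul_right_cancel₀ hne h2
      exact this
    have h3 : ((m : ℤ) : ℂ) = (((-t) * N : ℤ) : ℂ) := by push_cast at this ⊢; exact this
    have h4 : (m : ℤ) = (-t) * N := by exact_mod_cast h3
    have h5 : (N : ℤ) ∣ (m : ℤ) := ⟨-t, by rw [h4]; ring⟩
    exact_mod_cast h5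
  · rintro ⟨t, ht⟩
    refine ⟨-(t : ℤ), ?_⟩
    have hm : (m : ℂ) = N * t := by exact_mod_cast ht
    rw [hm]
    push_cast
    field_simp

lemma omegaN_pow_N : omegaN N ^ N = 1 := by
  rw [omegaN_pow_eq_one_iff]

lemma eN_zero : eN N 0 = 1 := by simp [eN]

lemma eN_add (a b : ZMod N) : eN N (a + b) = eN N a * eN N b := by
  have hval : (a + b).val = (a.val + b.val) % N := ZMod.val_add a b
  have : a.val + b.val = N * ((a.val + b.val) / N) + (a + b).val := by
    rw [hval]; exact (Nat.div_add_mod _ N).symm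
  rw [eN, eN, eN, ← pow_add, this, pow_add, pow_mul, omegaN_pow_N, one_pow, one_mul]

lemma eN_mul (a b : ZMod N) : eN N (a * b) = (eN N a) ^ b.val := by
  have hval : (a * b).val = (a.val * b.val) % N := ZMod.val_mul a b
  have : a.val * b.val = N * ((a.val * b.val) / N) + (a * b).val := by
    rw [hval]; exact (Nat.div_add_mod _ N).symm
  rw [eN, eN, ← pow_mul, this, pow_add, pow_mul, omegaN_pow_N, one_pow, one_mul]

lemma eN_neg_mul (a : ZMod N) : eN N (-a) * eN N a = 1 := by
  rw [← eN_add, neg_add_cancel, eN_zero]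

lemma conj_eN (a : ZMod N) : (starRingEnd ℂ) (eN N a) = eN N (-a) := by
  have habs : ‖omegaN N‖ = 1 := by
    have : omegaN N = Complex.exp ((↑(-2 * Real.pi / N : ℝ)) * Complex.I) := by
      rw [omegaN]; push_cast; ring_nf
    rw [this, Complex.norm_exp_ofReal_mul_I]
  have habs' : ‖eN N a‖ = 1 := by rw [eN, norm_pow, habs, one_pow]
  have h1 : (starRingEnd ℂ) (eN N a) * eN N a = 1 := by
    rw [mul_comm, Complex.mul_conj]
    norm_cast
    rw [← Complex.sq_norm, habs']; norm_num
  have h2 := eN_neg_mul N a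
  exact (eq_inv_of_mul_eq_one_left h1).trans (eq_inv_of_mul_eq_one_left h2).symm

lemma sum_eN (k : ZMod N) : ∑ x : ZMod N, eN N (k * x) = if k = 0 then (N : ℂ) else 0 := by
  split_ifs with hk
  · subst hk
    simp only [zero_mul, eN_zero]
    simp [ZMod.card]
  · have hz : ∀ x : ZMod N, eN N (k * x) = (eN N k) ^ x.val := fun x => eN_mul N k x
    simp only [hz]
    have hre : ∑ x : ZMod N, (eN N k) ^ x.val = ∑ i ∈ Finset.range N, (eN N k) ^ i := by
      refine Finset.sum_nbij' (fun x => x.val) (fun i => (i : ZMod N)) ?_ ?_ ?_ ?_ ?_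
      · intro x _; exact Finset.mem_range.2 (ZMod.val_lt x)
      · intro i _; exact Finset.mem_univ _
      · intro x _; exact ZMod.natCast_rightInverse x
      · intro i hi; exact ZMod.val_cast_of_lt (Finset.mem_range.1 hi)
      · intro x _; rfl
    rw [hre]
    have hk1 : eN N k ≠ 1 := by
      rw [eN, Ne, omegaN_pow_eq_one_iff]
      intro hdvd
      have hlt : k.val < N := ZMod.val_lt k
      have hpos : 0 < k.val := Nat.pos_of_ne_zero (fun h => hk ((ZMod.val_eq_zero k).mp h))
      exact absurd (Nat.le_of_dvd hpos hdvd) (by omega)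
    rw [geom_sum_eq hk1]
    have : eN N k ^ N = 1 := by
      rw [eN, ← pow_mul, mul_comm, pow_mul, omegaN_pow_N, one_pow]
    rw [this]
    simp

lemma sum_eN_pair (k1 k2 : ZMod N) :
    ∑ x : ZMod N × ZMod N, eN N (k1 * x.1 + k2 * x.2) =
      if k1 = 0 ∧ k2 = 0 then ((N : ℂ) ^ 2) else 0 := by
  rw [Fintype.sum_prod_type]
  have : ∀ x1 : ZMod N, ∑ x2 : ZMod N, eN N (k1 * x1 + k2 * x2)
      = eN N (k1 * x1) * ∑ x2 : ZMod N, eN N (k2 * x2) := by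
    intro x1
    rw [Finset.mul_sum]
    exact Finset.sum_congr rfl fun x2 _ => eN_add N _ _
  simp only [this]
  rw [← Finset.sum_mul, sum_eN, sum_eN]
  by_cases h1 : k1 = 0 <;> by_cases h2 : k2 = 0 <;> simp [h1, h2, sq]

lemma dft2_mul_conjT : dft2 N * (dft2 N)ᴴ = ((N : ℂ) ^ 2) • 1 := by
  ext ν μ
  simp only [Matrix.mul_apply, Matrix.conjTranspose_apply, dft2, Matrix.of_apply,
    Matrix.smul_apply, Matrix.one_apply, star_def, conj_eN]
  have : ∀ x : ZMod N × ZMod N,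
      eN N (ν.1 * x.1 + ν.2 * x.2) * eN N (-(μ.1 * x.1 + μ.2 * x.2))
        = eN N ((ν.1 - μ.1) * x.1 + (ν.2 - μ.2) * x.2) := by
    intro x
    rw [← eN_add]
    congr 1
    ring
  simp only [this]
  rw [sum_eN_pair]
  by_cases h : ν = μ
  · subst h; simp
  · have hne : ¬(ν.1 - μ.1 = 0 ∧ ν.2 - μ.2 = 0) := by
      rintro ⟨h1, h2⟩
      exact h (Prod.ext (sub_eq_zero.mp h1) (sub_eq_zero.mp h2))
    rw [if_neg hne, if_neg h]
    simp

lemma conjT_mul_dft2 : (dft2 N)ᴴ * dft2 N = ((N : ℂ) ^ 2) • 1 := by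
  ext ν μ
  simp only [Matrix.mul_apply, Matrix.conjTranspose_apply, dft2, Matrix.of_apply,
    Matrix.smul_apply, Matrix.one_apply, star_def, conj_eN]
  have : ∀ x : ZMod N × ZMod N,
      eN N (-(x.1 * ν.1 + x.2 * ν.2)) * eN N (x.1 * μ.1 + x.2 * μ.2)
        = eN N ((μ.1 - ν.1) * x.1 + (μ.2 - ν.2) * x.2) := by
    intro x
    rw [← eN_add]
    congr 1
    ring
  simp only [this]
  rw [sum_eN_pair]
  by_cases h : ν = μ
  · subst h; simp
  · have hne : ¬(μ.1 - ν.1 = 0 ∧ μ.2 - ν.2 = 0) := by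
      rintro ⟨h1, h2⟩
      exact h (Prod.ext (sub_eq_zero.mp h1).symm (sub_eq_zero.mp h2).symm)
    rw [if_neg hne, if_neg h]
    simp

lemma dft2_mulVec_bijective : Function.Bijective (dft2 N).mulVec := by
  have hN2 : ((N : ℂ) ^ 2) ≠ 0 := by
    exact pow_ne_zero _ (Nat.cast_ne_zero.2 (NeZero.ne N))
  have hGF : (((N : ℂ) ^ 2)⁻¹ • (dft2 N)ᴴ) * dft2 N = 1 := by
    rw [Matrix.smul_mul, conjT_mul_dft2, smul_smul, inv_mul_cancel₀ hN2, one_smul]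
  have hFG : dft2 N * (((N : ℂ) ^ 2)⁻¹ • (dft2 N)ᴴ) = 1 := by
    rw [Matrix.mul_smul, dft2_mul_conjT, smul_smul, inv_mul_cancel₀ hN2, one_smul]
  constructor
  · intro a b hab
    have := congrArg (fun v => (((N : ℂ) ^ 2)⁻¹ • (dft2 N)ᴴ).mulVec v) hab
    simpa [Matrix.mulVec_mulVec, hGF] using this
  · intro g
    refine ⟨(((N : ℂ) ^ 2)⁻¹ • (dft2 N)ᴴ).mulVec g, ?_⟩
    rw [Matrix.mulVec_mulVec, hFG, Matrix.one_mulVec]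

end aux

/-- Invertibility criterion: Σⱼ (B⁽ʲ⁾)*B⁽ʲ⁾ is invertible iff the stacked cyclic-shift matrix
built from the zero-extended coefficient vectors ĉ⁽ʲ⁾ has full column rank N²; in particular
invertibility forces N_c·|Λ_P| ≥ N² and Λ_N ⊆ ∪_{ν∈Λ_P}(ν + Λ_L). -/
theorem stmt11 (N L n Nc : ℕ) [NeZero N] (hL : L = 2 * n + 1) (hLN : L < N)
    (c : Fin Nc → Fin L × Fin L → ℂ)
    (s : Fin Nc → ZMod N × ZMod N → ℂ)
    (hsdef : ∀ j, s j = Wmap N L (c j))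
    (hpos : ∀ x, 0 < ∑ j : Fin Nc, ‖s j x‖ ^ 2)
    (st : Fin Nc → ZMod N × ZMod N → ℂ)
    (hst : ∀ j x, st j x =
      s j x * (((Real.sqrt (∑ ℓ : Fin Nc, ‖s ℓ x‖ ^ 2))⁻¹ : ℝ) : ℂ))
    (ΛP : Finset (ZMod N × ZMod N))
    (B : Fin Nc → Matrix (ZMod N × ZMod N) (ZMod N × ZMod N) ℂ)
    (hB : ∀ j, B j = Matrix.diagonal (fun i => if i ∈ ΛP then (1 : ℂ) else 0) *
      dft2 N * Matrix.diagonal (st j))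
    (cc : Fin Nc → ZMod N × ZMod N → ℂ)
    (hcc : ∀ j (r : Fin L × Fin L), cc j (cenM N L r.1, cenM N L r.2) = c j r)
    (hcc0 : ∀ j x, (∀ r : Fin L × Fin L, (cenM N L r.1, cenM N L r.2) ≠ x) → cc j x = 0) :
    (IsUnit (∑ j : Fin Nc, (B j)ᴴ * B j) ↔
      ∀ g : ZMod N × ZMod N → ℂ,
        (∀ j : Fin Nc, ∀ ν ∈ ΛP,
          ∑ x : ZMod N × ZMod N, cc j (ν.1 - x.1, ν.2 - x.2) * g x = 0) → g = 0) ∧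
    (IsUnit (∑ j : Fin Nc, (B j)ᴴ * B j) →
      (N ^ 2 ≤ Nc * ΛP.card ∧
        ∀ x : ZMod N × ZMod N, ∃ ν ∈ ΛP, ∃ r : Fin L × Fin L,
          x = (ν.1 + cenM N L r.1, ν.2 + cenM N L r.2))) := by
  -- weight function
  set w : ZMod N × ZMod N → ℝ :=
    fun x => (Real.sqrt (∑ ℓ : Fin Nc, ‖s ℓ x‖ ^ 2))⁻¹ with hwdef
  have hwpos : ∀ x, 0 < w x := fun x =>
    inv_pos.2 (Real.sqrt_pos.2 (hpos x))
  have hwne : ∀ x, ((w x : ℝ) : ℂ) ≠ 0 := fun x =>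
    Complex.ofReal_ne_zero.2 (ne_of_gt (hwpos x))
  have hst' : ∀ j x, st j x = s j x * ((w x : ℝ) : ℂ) := fun j x => hst j x
  -- injectivity of the centering embedding
  have hcen_inj : Function.Injective (cenM N L) := by
    intro i i' hii
    have h1 : ((i : ℕ) : ZMod N) = ((i' : ℕ) : ZMod N) := by
      have := sub_left_injective (G := ZMod N) (b := (((L - 1) / 2 : ℕ) : ZMod N)) hii
      exact this
    have h2 : ((i : ℕ) : ZMod N).val = ((i' : ℕ) : ZMod N).val := by rw [h1]
    rw [ZMod.val_cast_of_lt (lt_trans i.2 hLN), ZMod.val_cast_of_lt (lt_trans i'.2 hLN)] at h2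
    exact Fin.ext h2
  have he_inj : Function.Injective
      (fun r : Fin L × Fin L => (cenM N L r.1, cenM N L r.2)) := by
    intro r r' hrr
    have h1 := congrArg Prod.fst hrr
    have h2 := congrArg Prod.snd hrr
    simp only at h1 h2
    exact Prod.ext (hcen_inj h1) (hcen_inj h2)
  -- sum over support of cc
  have sumS : ∀ (j : Fin Nc) (f : ZMod N × ZMod N → ℂ),
      ∑ z : ZMod N × ZMod N, cc j z * f z
        = ∑ r : Fin L × Fin L, c j r * f (cenM N L r.1, cenM N L r.2) := by
    intro j f
    have h1 : ∑ z : ZMod N × ZMod N, cc j z * f z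
        = ∑ z ∈ Finset.univ.image
            (fun r : Fin L × Fin L => (cenM N L r.1, cenM N L r.2)), cc j z * f z := by
      refine (Finset.sum_subset (Finset.subset_univ _) ?_).symm
      intro z _ hz
      have hz' : ∀ r : Fin L × Fin L, (cenM N L r.1, cenM N L r.2) ≠ z := by
        intro r hr
        exact hz (Finset.mem_image.2 ⟨r, Finset.mem_univ _, hr⟩)
      rw [hcc0 j z hz', zero_mul]
    rw [h1, Finset.sum_image (fun r _ r' _ h => he_inj h)]
    exact Finset.sum_congr rfl fun r _ => by rw [hcc j r]
  -- the convolution identity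
  have convEq : ∀ (j : Fin Nc) (ν : ZMod N × ZMod N) (u : ZMod N × ZMod N → ℂ),
      ∑ x : ZMod N × ZMod N, cc j (ν.1 - x.1, ν.2 - x.2) * ((dft2 N) *ᵥ u) x
        = ∑ y : ZMod N × ZMod N, eN N (ν.1 * y.1 + ν.2 * y.2) * (s j y * u y) := by
    intro j ν u
    have hinvol : Function.Involutive
        (fun x : ZMod N × ZMod N => (ν.1 - x.1, ν.2 - x.2)) := by
      intro x; simp
    have h1 : ∑ x : ZMod N × ZMod N, cc j (ν.1 - x.1, ν.2 - x.2) * ((dft2 N) *ᵥ u) x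
        = ∑ z : ZMod N × ZMod N, cc j z * ((dft2 N) *ᵥ u) (ν.1 - z.1, ν.2 - z.2) := by
      refine Fintype.sum_bijective _ hinvol.bijective _ _ fun x => ?_
      simp
    rw [h1, sumS j]
    calc ∑ r : Fin L × Fin L,
          c j r * ((dft2 N) *ᵥ u) (ν.1 - cenM N L r.1, ν.2 - cenM N L r.2)
        = ∑ r : Fin L × Fin L, ∑ y : ZMod N × ZMod N,
            c j r * (eN N ((ν.1 - cenM N L r.1) * y.1 + (ν.2 - cenM N L r.2) * y.2) * u y) := by
          refine Finset.sum_congr rfl fun r _ => ?_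
          rw [Matrix.mulVec, dotProduct, Finset.mul_sum]
          rfl
      _ = ∑ y : ZMod N × ZMod N, ∑ r : Fin L × Fin L,
            eN N (ν.1 * y.1 + ν.2 * y.2) *
              (c j r * eN N (-(cenM N L r.1 * y.1 + cenM N L r.2 * y.2))) * u y := by
          rw [Finset.sum_comm]
          refine Finset.sum_congr rfl fun y _ => Finset.sum_congr rfl fun r _ => ?_
          have hsplit : (ν.1 - cenM N L r.1) * y.1 + (ν.2 - cenM N L r.2) * y.2
              = (ν.1 * y.1 + ν.2 * y.2) + (-(cenM N L r.1 * y.1 + cenM N L r.2 * y.2)) := by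
            ring
          rw [hsplit, eN_add]
          ring
      _ = ∑ y : ZMod N × ZMod N, eN N (ν.1 * y.1 + ν.2 * y.2) * (s j y * u y) := by
          refine Finset.sum_congr rfl fun y _ => ?_
          rw [hsdef j]
          simp only [Wmap]
          rw [Finset.sum_mul, Finset.mul_sum]
          exact Finset.sum_congr rfl fun r _ => by ring
  -- entries of B j *ᵥ h
  have hBmul : ∀ (j : Fin Nc) (h : ZMod N × ZMod N → ℂ) (ν : ZMod N × ZMod N),
      (B j *ᵥ h) ν = (if ν ∈ ΛP then (1:ℂ) else 0) *
        ∑ y : ZMod N × ZMod N,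
          eN N (ν.1 * y.1 + ν.2 * y.2) * (s j y * (((w y : ℝ) : ℂ) * h y)) := by
    intro j h ν
    rw [hB j, ← Matrix.mulVec_mulVec, ← Matrix.mulVec_mulVec]
    rw [Matrix.mulVec_diagonal]
    congr 1
    rw [Matrix.mulVec, dotProduct]
    refine Finset.sum_congr rfl fun y _ => ?_
    rw [Matrix.mulVec_diagonal, hst' j y]
    simp only [dft2, Matrix.of_apply]
    ring
  -- kernel characterization of the normal matrix
  have hsumv : ∀ (h : ZMod N × ZMod N → ℂ),
      (∑ j : Fin Nc, (B j)ᴴ * B j) *ᵥ h = ∑ j : Fin Nc, ((B j)ᴴ * B j) *ᵥ h := by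
    intro h
    funext ν
    simp [Matrix.mulVec, dotProduct, Matrix.sum_apply, Finset.sum_mul]
    rw [Finset.sum_comm]
  have hMzero : ∀ h : ZMod N × ZMod N → ℂ,
      ((∑ j : Fin Nc, (B j)ᴴ * B j) *ᵥ h = 0) ↔ ∀ j, B j *ᵥ h = 0 := by
    intro h
    constructor
    · intro hM
      have hdot : ∑ j : Fin Nc, star (B j *ᵥ h) ⬝ᵥ (B j *ᵥ h) = 0 := by
        have h0 : star h ⬝ᵥ ((∑ j : Fin Nc, (B j)ᴴ * B j) *ᵥ h) = 0 := by
          rw [hM, dotProduct_zero]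
        rw [← h0, hsumv]
        rw [show star h ⬝ᵥ (∑ j : Fin Nc, ((B j)ᴴ * B j) *ᵥ h)
            = ∑ j : Fin Nc, star h ⬝ᵥ (((B j)ᴴ * B j) *ᵥ h) by
          simp [dotProduct, Finset.mul_sum]
          rw [Finset.sum_comm]]
        refine Finset.sum_congr rfl fun j _ => ?_
        rw [Matrix.star_mulVec, ← dotProduct_mulVec, Matrix.mulVec_mulVec]
      have hdot2 : ∑ j : Fin Nc, ∑ i : ZMod N × ZMod N,
          ((Complex.normSq ((B j *ᵥ h) i) : ℝ) : ℂ) = 0 := by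
        rw [← hdot]
        refine Finset.sum_congr rfl fun j _ => ?_
        simp only [dotProduct, Pi.star_apply, RCLike.star_def]
        exact Finset.sum_congr rfl fun i _ => by rw [mul_comm, Complex.mul_conj]
      have hreal : ∑ j : Fin Nc, ∑ i : ZMod N × ZMod N,
          Complex.normSq ((B j *ᵥ h) i) = 0 := by exact_mod_cast hdot2
      intro j
      funext i
      have h1 := (Finset.sum_eq_zero_iff_of_nonneg
        (fun j _ => Finset.sum_nonneg fun i _ => Complex.normSq_nonneg _)).mp hreal j
        (Finset.mem_univ j)
      have h2 := (Finset.sum_eq_zero_iff_of_nonneg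
        (fun i _ => Complex.normSq_nonneg _)).mp h1 i (Finset.mem_univ i)
      simpa using Complex.normSq_eq_zero.mp h2
    · intro hz
      rw [hsumv]
      refine Finset.sum_eq_zero fun j _ => ?_
      rw [← Matrix.mulVec_mulVec, hz j, Matrix.mulVec_zero]
  have hker : IsUnit (∑ j : Fin Nc, (B j)ᴴ * B j) ↔
      ∀ h : ZMod N × ZMod N → ℂ, (∀ j, B j *ᵥ h = 0) → h = 0 := by
    rw [← Matrix.mulVec_injective_iff_isUnit]
    constructor
    · intro hinj h hz
      have : (∑ j : Fin Nc, (B j)ᴴ * B j) *ᵥ h = (∑ j : Fin Nc, (B j)ᴴ * B j) *ᵥ 0 := by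
        rw [Matrix.mulVec_zero, (hMzero h).2 hz]
      exact hinj this
    · intro hk a b hab
      have hd : (∑ j : Fin Nc, (B j)ᴴ * B j) *ᵥ (a - b) = 0 := by
        rw [Matrix.mulVec_sub, hab, sub_self]
      exact sub_eq_zero.mp (hk (a - b) ((hMzero _).1 hd))
  -- the main equivalence
  have main : IsUnit (∑ j : Fin Nc, (B j)ᴴ * B j) ↔
      ∀ g : ZMod N × ZMod N → ℂ,
        (∀ j : Fin Nc, ∀ ν ∈ ΛP,
          ∑ x : ZMod N × ZMod N, cc j (ν.1 - x.1, ν.2 - x.2) * g x = 0) → g = 0 := by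
    rw [hker]
    constructor
    · intro hk g hg
      obtain ⟨u, hu⟩ := (dft2_mulVec_bijective N).2 g
      set h : ZMod N × ZMod N → ℂ := fun y => (((w y : ℝ) : ℂ))⁻¹ * u y with hhdef
      have hwh : ∀ y, ((w y : ℝ) : ℂ) * h y = u y := by
        intro y
        rw [hhdef]
        field_simp
        exact mul_div_cancel_left₀ (u y) (hwne y)
      have hBz : ∀ j, B j *ᵥ h = 0 := by
        intro j
        funext ν
        rw [hBmul j h ν]
        by_cases hν : ν ∈ ΛP
        · rw [if_pos hν, one_mul]
          simp only [hwh]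
          rw [← convEq j ν u, hu]
          simpa using hg j ν hν
        · rw [if_neg hν, zero_mul]
          simp
      have hzero : h = 0 := hk h hBz
      have hu0 : u = 0 := by
        funext y
        rw [← hwh y, hzero]
        simp
      rw [← hu, hu0, Matrix.mulVec_zero]
    · intro hG h hBz
      set u : ZMod N × ZMod N → ℂ := fun y => ((w y : ℝ) : ℂ) * h y with hudef
      have hconv : ∀ j : Fin Nc, ∀ ν ∈ ΛP,
          ∑ x : ZMod N × ZMod N, cc j (ν.1 - x.1, ν.2 - x.2) * ((dft2 N) *ᵥ u) x = 0 := by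
        intro j ν hν
        rw [convEq j ν u]
        have := congrFun (hBz j) ν
        rw [hBmul j h ν, if_pos hν, one_mul] at this
        simpa [hudef] using this
      have hg0 : (dft2 N) *ᵥ u = 0 := hG _ hconv
      have hu0 : u = 0 := by
        apply (dft2_mulVec_bijective N).1
        rw [hg0, Matrix.mulVec_zero]
      funext y
      have := congrFun hu0 y
      simp only [hudef, Pi.zero_apply] at this
      rcases mul_eq_zero.mp this with h' | h'
      · exact absurd h' (hwne y)
      · simpa using h'
  refine ⟨main, fun hU => ?_⟩
  have Ginj := main.mp hU
  constructor
  · -- rank bound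
    set T : (ZMod N × ZMod N → ℂ) →ₗ[ℂ] (Fin Nc × {v // v ∈ ΛP} → ℂ) :=
      { toFun := fun g p => ∑ x : ZMod N × ZMod N,
          cc p.1 ((p.2 : ZMod N × ZMod N).1 - x.1, (p.2 : ZMod N × ZMod N).2 - x.2) * g x,
        map_add' := by
          intro g g'
          funext p
          simp [mul_add, Finset.sum_add_distrib]
        map_smul' := by
          intro a g
          funext p
          simp [Finset.mul_sum]
          refine Finset.sum_congr rfl fun x _ => by ring } with hT
    have hTinj : Function.Injective T := by
      refine (injective_iff_map_eq_zero T).mpr ?_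
      intro g hg0
      apply Ginj g
      intro j ν hν
      exact congrFun hg0 (j, ⟨ν, hν⟩)
    have hle := LinearMap.finrank_le_finrank_of_injective hTinj
    rw [Module.finrank_fintype_fun_eq_card, Module.finrank_fintype_fun_eq_card] at hle
    simpa [Fintype.card_prod, ZMod.card, Fintype.card_coe, sq] using hle
  · -- coverage
    by_contra hcov
    push_neg at hcov
    obtain ⟨x₀, hx₀⟩ := hcov
    set g : ZMod N × ZMod N → ℂ := fun x => if x = x₀ then 1 else 0 with hgdef
    have hgconv : ∀ j : Fin Nc, ∀ ν ∈ ΛP,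
        ∑ x : ZMod N × ZMod N, cc j (ν.1 - x.1, ν.2 - x.2) * g x = 0 := by
      intro j ν hν
      have hsum : ∑ x : ZMod N × ZMod N, cc j (ν.1 - x.1, ν.2 - x.2) * g x
          = cc j (ν.1 - x₀.1, ν.2 - x₀.2) := by
        rw [hgdef]
        simp [mul_ite]
      rw [hsum]
      apply hcc0
      intro r hr
      -- r with cen r = ν - x₀ gives x₀ = ν + cen (neg r)
      have h1 : cenM N L r.1 = ν.1 - x₀.1 := congrArg Prod.fst hr
      have h2 : cenM N L r.2 = ν.2 - x₀.2 := congrArg Prod.snd hr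
      -- negation within Fin L
      have hneg : ∀ i : Fin L, ∃ i' : Fin L, cenM N L i' = - cenM N L i := by
        intro i
        refine ⟨⟨L - 1 - (i : ℕ), by omega⟩, ?_⟩
        have hi : (i : ℕ) ≤ 2 * n := by omega
        have hL1 : L - 1 - (i : ℕ) = 2 * n - (i : ℕ) := by omega
        have hhalf : (L - 1) / 2 = n := by omega
        simp only [cenM, hL1, hhalf]
        rw [Nat.cast_sub hi]
        push_cast
        ring
      obtain ⟨r1', hr1⟩ := hneg r.1
      obtain ⟨r2', hr2⟩ := hneg r.2
      refine hx₀ ν hν (r1', r2') ?_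
      have : x₀ = (ν.1 - cenM N L r.1, ν.2 - cenM N L r.2) := by
        rw [h1, h2]
        exact Prod.ext (by ring) (by ring)
      rw [this, hr1, hr2]
      exact Prod.ext (by simp; ring) (by simp; ring)
    have := Ginj g hgconv
    have hg1 : g x₀ = 1 := by rw [hgdef]; simp
    rw [this] at hg1
    simpa using hg1
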